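/- Define κ = (Z − p)/(p(1−p)) with p = P(Z=1) ∈ (0,1). Under the stochastic compliance class IV assumptions, E[κ·(1−D)·g(Y)] = −E[g(Y(0))·w(U)], and hence if E[κ·D] ≠ 0, E[κ·g(Y)]/E[κ·D] = E[(g(Y(1)) − g(Y(0)))·w(U)]/E[w(U)]. -/

import Mathlib

open Finset
open scoped Classical

/-- Probability of an event `A` under mass function `p` on a finite sample space. -/
noncomputable def prb {Ω : Type*} [Fintype Ω] (p : Ω → ℝ) (A : Ω → Prop) : ℝ :=
  ∑ ω, if A ω then p ω else 0

/-- Expectation of a real random variable `X` under mass function `p`. -/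
noncomputable def exv {Ω : Type*} [Fintype Ω] (p : Ω → ℝ) (X : Ω → ℝ) : ℝ :=
  ∑ ω, p ω * X ω

/-- Conditional probability `P(A | B)`. -/
noncomputable def cpr {Ω : Type*} [Fintype Ω] (p : Ω → ℝ) (A B : Ω → Prop) : ℝ :=
  prb p (fun ω => A ω ∧ B ω) / prb p B

/-- Conditional expectation `E[X | B]`. -/
noncomputable def cex {Ω : Type*} [Fintype Ω] (p : Ω → ℝ) (X : Ω → ℝ) (B : Ω → Prop) : ℝ :=
  (∑ ω, if B ω then p ω * X ω else 0) / prb p B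

lemma prb_congr {Ω : Type*} [Fintype Ω] (p : Ω → ℝ) (A B : Ω → Prop)
    (h : ∀ ω, A ω ↔ B ω) : prb p A = prb p B := by
  unfold prb
  exact Finset.sum_congr rfl fun ω _ => by rw [if_congr (h ω) rfl rfl]

lemma cpr_mul_prb {Ω : Type*} [Fintype Ω] (p : Ω → ℝ) (A B : Ω → Prop)
    (hB : prb p B ≠ 0) : cpr p A B * prb p B = prb p (fun ω => A ω ∧ B ω) := by
  unfold cpr
  field_simp

lemma fiber_sum {Ω α : Type*} [Fintype Ω] [DecidableEq α] (φ : Ω → α) (G : α → Ω → ℝ) :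
    ∑ ω, G (φ ω) ω =
      ∑ v ∈ Finset.image φ Finset.univ, ∑ ω ∈ Finset.univ.filter (fun ω => φ ω = v), G v ω := by
  rw [← Finset.sum_fiberwise_of_maps_to (fun x _ => Finset.mem_image_of_mem φ (Finset.mem_univ x))
    (fun ω => G (φ ω) ω)]
  refine Finset.sum_congr rfl fun v _ => Finset.sum_congr rfl fun ω hω => ?_
  rw [(Finset.mem_filter.1 hω).2]

lemma evI_fiber {Ω : Type*} [Fintype Ω] (p : Ω → ℝ) (B : Ω → Prop) [DecidablePred B] (Y1 Y0 : Ω → ℝ)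
    (f : ℝ → ℝ → ℝ) :
    (∑ ω, if B ω then p ω * f (Y1 ω) (Y0 ω) else 0) =
      ∑ v ∈ Finset.image (fun ω => (Y1 ω, Y0 ω)) Finset.univ,
        f v.1 v.2 * prb p (fun ω => Y1 ω = v.1 ∧ Y0 ω = v.2 ∧ B ω) := by
  refine Eq.trans (fiber_sum (fun ω => (Y1 ω, Y0 ω))
    (fun v ω => if B ω then p ω * f v.1 v.2 else 0)) ?_
  refine Finset.sum_congr rfl fun v _ => ?_
  rw [Finset.sum_filter]
  unfold prb
  rw [Finset.mul_sum]
  refine Finset.sum_congr rfl fun ω _ => ?_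
  by_cases h1 : Y1 ω = v.1 <;> by_cases h2 : Y0 ω = v.2 <;> by_cases h3 : B ω <;>
    simp [Prod.ext_iff, h1, h2, h3, mul_comm]

/-- κ-weighting for Y(0) and the combined ratio identity. -/
theorem stmt6 {Ω ι : Type*} [Fintype Ω] [Fintype ι]
    (p : Ω → ℝ) (hp : ∀ ω, 0 ≤ p ω) (hpsum : ∑ ω, p ω = 1)
    (Z D Y Y1 Y0 : Ω → ℝ) (U : Ω → ι)
    (hZbin : ∀ ω, Z ω = 0 ∨ Z ω = 1) (hDbin : ∀ ω, D ω = 0 ∨ D ω = 1)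
    (hYobs : ∀ ω, Y ω = D ω * Y1 ω + (1 - D ω) * Y0 ω)
    (hpos : ∀ (z : ℝ) (u : ι), (z = 0 ∨ z = 1) →
      0 < prb p (fun ω => Z ω = z ∧ U ω = u))
    (hindep : ∀ (y1 y0 : ℝ) (u : ι) (z : ℝ),
      prb p (fun ω => Y1 ω = y1 ∧ Y0 ω = y0 ∧ U ω = u ∧ Z ω = z) =
        prb p (fun ω => Y1 ω = y1 ∧ Y0 ω = y0 ∧ U ω = u) * prb p (fun ω => Z ω = z))
    (hcind : ∀ (y1 y0 d z : ℝ) (u : ι),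
      cpr p (fun ω => Y1 ω = y1 ∧ Y0 ω = y0 ∧ D ω = d) (fun ω => Z ω = z ∧ U ω = u) =
        cpr p (fun ω => Y1 ω = y1 ∧ Y0 ω = y0) (fun ω => Z ω = z ∧ U ω = u) *
          cpr p (fun ω => D ω = d) (fun ω => Z ω = z ∧ U ω = u))
    (w : ι → ℝ)
    (hw : ∀ u, w u = cpr p (fun ω => D ω = 1) (fun ω => Z ω = 1 ∧ U ω = u) -
                    cpr p (fun ω => D ω = 1) (fun ω => Z ω = 0 ∧ U ω = u))
    (pZ : ℝ) (hpZ : pZ = prb p (fun ω => Z ω = 1)) (hpZ0 : 0 < pZ) (hpZ1 : pZ < 1)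
    (κ : Ω → ℝ) (hκ : ∀ ω, κ ω = (Z ω - pZ) / (pZ * (1 - pZ)))
    (g : ℝ → ℝ) :
    exv p (fun ω => κ ω * (1 - D ω) * g (Y ω)) = -exv p (fun ω => g (Y0 ω) * w (U ω)) ∧
    (exv p (fun ω => κ ω * D ω) ≠ 0 →
      exv p (fun ω => κ ω * g (Y ω)) / exv p (fun ω => κ ω * D ω) =
        exv p (fun ω => (g (Y1 ω) - g (Y0 ω)) * w (U ω)) / exv p (fun ω => w (U ω))) := by
  have hp0 : pZ ≠ 0 := ne_of_gt hpZ0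
  have hp1 : (1 : ℝ) - pZ ≠ 0 := by linarith
  have hPZ1 : prb p (fun ω => Z ω = 1) = pZ := hpZ.symm
  have hPZ0 : prb p (fun ω => Z ω = 0) = 1 - pZ := by
    have hsum : prb p (fun ω => Z ω = 0) + prb p (fun ω => Z ω = 1) = 1 := by
      unfold prb
      rw [← Finset.sum_add_distrib]
      calc (∑ ω, ((if Z ω = 0 then p ω else 0) + if Z ω = 1 then p ω else 0)) = ∑ ω, p ω :=
            Finset.sum_congr rfl fun ω _ => by rcases hZbin ω with h | h <;> simp [h]
        _ = 1 := hpsum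
    linarith
  -- K1 : independence lifted to expectations of functions of (Y1, Y0)
  have K1 : ∀ (z : ℝ) (u : ι) (f : ℝ → ℝ → ℝ),
      (∑ ω, if Z ω = z ∧ U ω = u then p ω * f (Y1 ω) (Y0 ω) else 0) =
        (∑ ω, if U ω = u then p ω * f (Y1 ω) (Y0 ω) else 0) * prb p (fun ω => Z ω = z) := by
    intro z u f
    rw [evI_fiber p (fun ω => Z ω = z ∧ U ω = u) Y1 Y0 f, evI_fiber p (fun ω => U ω = u) Y1 Y0 f,
      Finset.sum_mul]
    refine Finset.sum_congr rfl fun v _ => ?_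
    rw [prb_congr p _ (fun ω => Y1 ω = v.1 ∧ Y0 ω = v.2 ∧ U ω = u ∧ Z ω = z) (fun ω => by tauto),
      hindep v.1 v.2 u z]
    ring
  -- K2 : conditional independence lifted
  have K2 : ∀ (z : ℝ) (u : ι), (z = 0 ∨ z = 1) → ∀ f : ℝ → ℝ → ℝ,
      (∑ ω, if Z ω = z ∧ U ω = u then p ω * (D ω * f (Y1 ω) (Y0 ω)) else 0) =
        (∑ ω, if Z ω = z ∧ U ω = u then p ω * f (Y1 ω) (Y0 ω) else 0) *
          cpr p (fun ω => D ω = 1) (fun ω => Z ω = z ∧ U ω = u) := by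
    intro z u hz f
    have hBne : prb p (fun ω => Z ω = z ∧ U ω = u) ≠ 0 := ne_of_gt (hpos z u hz)
    have step1 : (∑ ω, if Z ω = z ∧ U ω = u then p ω * (D ω * f (Y1 ω) (Y0 ω)) else 0) =
        ∑ ω, if D ω = 1 ∧ (Z ω = z ∧ U ω = u) then p ω * f (Y1 ω) (Y0 ω) else 0 := by
      refine Finset.sum_congr rfl fun ω _ => ?_
      rcases hDbin ω with h | h <;> simp [h]
    rw [step1, evI_fiber p (fun ω => D ω = 1 ∧ (Z ω = z ∧ U ω = u)) Y1 Y0 f,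
      evI_fiber p (fun ω => Z ω = z ∧ U ω = u) Y1 Y0 f, Finset.sum_mul]
    refine Finset.sum_congr rfl fun v _ => ?_
    have h1 : prb p (fun ω => Y1 ω = v.1 ∧ Y0 ω = v.2 ∧ (D ω = 1 ∧ (Z ω = z ∧ U ω = u))) =
        prb p (fun ω => (Y1 ω = v.1 ∧ Y0 ω = v.2 ∧ D ω = 1) ∧ (Z ω = z ∧ U ω = u)) :=
      prb_congr _ _ _ (fun ω => by tauto)
    have h2 : prb p (fun ω => Y1 ω = v.1 ∧ Y0 ω = v.2 ∧ (Z ω = z ∧ U ω = u)) =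
        prb p (fun ω => (Y1 ω = v.1 ∧ Y0 ω = v.2) ∧ (Z ω = z ∧ U ω = u)) :=
      prb_congr _ _ _ (fun ω => by tauto)
    rw [h1, h2,
      ← cpr_mul_prb p (fun ω => Y1 ω = v.1 ∧ Y0 ω = v.2 ∧ D ω = 1) _ hBne,
      ← cpr_mul_prb p (fun ω => Y1 ω = v.1 ∧ Y0 ω = v.2) _ hBne,
      hcind v.1 v.2 1 z u]
    ring
  -- partition over u, with a Z-condition
  have partZU : ∀ (z : ℝ) (X : Ω → ℝ),
      (∑ ω, if Z ω = z then p ω * X ω else 0) =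
        ∑ u : ι, ∑ ω, if Z ω = z ∧ U ω = u then p ω * X ω else 0 := by
    intro z X
    rw [Finset.sum_comm]
    refine Finset.sum_congr rfl fun ω _ => ?_
    by_cases h : Z ω = z
    · rw [Finset.sum_congr rfl (fun u _ => show (if Z ω = z ∧ U ω = u then p ω * X ω else 0) =
        (if U ω = u then p ω * X ω else 0) from by by_cases h2 : U ω = u <;> simp [h, h2])]
      simp [h, Finset.sum_ite_eq]
    · simp [h]
  -- partition over u, unconditioned
  have partU : ∀ (X : Ω → ℝ),
      (∑ ω, p ω * X ω) = ∑ u : ι, ∑ ω, if U ω = u then p ω * X ω else 0 := by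
    intro X
    rw [Finset.sum_comm]
    refine Finset.sum_congr rfl fun ω _ => ?_
    simp [Finset.sum_ite_eq]
  -- κ split
  have hκsplit : ∀ (X : Ω → ℝ), exv p (fun ω => κ ω * X ω) =
      (1 / pZ) * (∑ ω, if Z ω = 1 then p ω * X ω else 0) -
        (1 / (1 - pZ)) * (∑ ω, if Z ω = 0 then p ω * X ω else 0) := by
    intro X
    simp only [exv]
    rw [Finset.mul_sum, Finset.mul_sum, ← Finset.sum_sub_distrib]
    refine Finset.sum_congr rfl fun ω _ => ?_
    rcases hZbin ω with h | h <;> rw [hκ ω, h] <;> simp [zero_ne_one, one_ne_zero] <;> field_simp <;> ring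
  -- sums over u with weight w u collapse to an expectation
  have sumU : ∀ (X : Ω → ℝ),
      (∑ u : ι, (∑ ω, if U ω = u then p ω * X ω else 0) * w u) =
        exv p (fun ω => X ω * w (U ω)) := by
    intro X
    simp only [exv]
    rw [partU (fun ω => X ω * w (U ω))]
    refine Finset.sum_congr rfl fun u _ => ?_
    rw [Finset.sum_mul]
    refine Finset.sum_congr rfl fun ω _ => ?_
    by_cases h : U ω = u <;> simp [h] <;> ring
  -- M1 : E[κ f(Y1,Y0)] = 0
  have M1 : ∀ f : ℝ → ℝ → ℝ, exv p (fun ω => κ ω * f (Y1 ω) (Y0 ω)) = 0 := by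
    intro f
    rw [hκsplit (fun ω => f (Y1 ω) (Y0 ω))]
    have hz : ∀ z : ℝ, (∑ ω, if Z ω = z then p ω * f (Y1 ω) (Y0 ω) else 0) =
        (∑ u : ι, ∑ ω, if U ω = u then p ω * f (Y1 ω) (Y0 ω) else 0) *
          prb p (fun ω => Z ω = z) := by
      intro z
      rw [partZU z (fun ω => f (Y1 ω) (Y0 ω)), Finset.sum_mul]
      exact Finset.sum_congr rfl fun u _ => K1 z u f
    rw [hz 1, hz 0, hPZ1, hPZ0]
    field_simp
    ring
  -- M2 : E[κ D f(Y1,Y0)] = E[f(Y1,Y0) w(U)]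
  have M2 : ∀ f : ℝ → ℝ → ℝ, exv p (fun ω => κ ω * (D ω * f (Y1 ω) (Y0 ω))) =
      exv p (fun ω => f (Y1 ω) (Y0 ω) * w (U ω)) := by
    intro f
    rw [hκsplit (fun ω => D ω * f (Y1 ω) (Y0 ω))]
    have hz : ∀ z : ℝ, (z = 0 ∨ z = 1) →
        (∑ ω, if Z ω = z then p ω * (D ω * f (Y1 ω) (Y0 ω)) else 0) =
          ∑ u : ι, (∑ ω, if U ω = u then p ω * f (Y1 ω) (Y0 ω) else 0) *
            (prb p (fun ω => Z ω = z) *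
              cpr p (fun ω => D ω = 1) (fun ω => Z ω = z ∧ U ω = u)) := by
      intro z hzv
      rw [partZU z (fun ω => D ω * f (Y1 ω) (Y0 ω))]
      refine Finset.sum_congr rfl fun u _ => ?_
      rw [K2 z u hzv f, K1 z u f]
      ring
    rw [hz 1 (Or.inr rfl), hz 0 (Or.inl rfl), hPZ1, hPZ0, ← sumU (fun ω => f (Y1 ω) (Y0 ω)),
      Finset.mul_sum, Finset.mul_sum, ← Finset.sum_sub_distrib]
    refine Finset.sum_congr rfl fun u _ => ?_
    rw [hw u]
    field_simp
  -- beta-reduced instantiations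
  have M1Y0 : exv p (fun ω => κ ω * g (Y0 ω)) = 0 := M1 (fun _ y0 => g y0)
  have M2Y0 : exv p (fun ω => κ ω * (D ω * g (Y0 ω))) = exv p (fun ω => g (Y0 ω) * w (U ω)) :=
    M2 (fun _ y0 => g y0)
  have M2Y1 : exv p (fun ω => κ ω * (D ω * g (Y1 ω))) = exv p (fun ω => g (Y1 ω) * w (U ω)) :=
    M2 (fun y1 _ => g y1)
  have M2one : exv p (fun ω => κ ω * (D ω * 1)) = exv p (fun ω => (1 : ℝ) * w (U ω)) :=
    M2 (fun _ _ => 1)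
  have hYD0 : ∀ ω, D ω = 0 → Y ω = Y0 ω := fun ω h => by rw [hYobs ω, h]; ring
  have hYD1 : ∀ ω, D ω = 1 → Y ω = Y1 ω := fun ω h => by rw [hYobs ω, h]; ring
  constructor
  · -- first claim
    have key : exv p (fun ω => κ ω * (1 - D ω) * g (Y ω)) =
        exv p (fun ω => κ ω * g (Y0 ω)) - exv p (fun ω => κ ω * (D ω * g (Y0 ω))) := by
      simp only [exv]
      rw [← Finset.sum_sub_distrib]
      refine Finset.sum_congr rfl fun ω _ => ?_
      rcases hDbin ω with h | h
      · rw [hYD0 ω h, h]; ring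
      · rw [h]; ring
    rw [key, M1Y0, M2Y0]
    ring
  · intro _
    have final : exv p (fun ω => g (Y1 ω) * w (U ω)) - exv p (fun ω => g (Y0 ω) * w (U ω)) =
        exv p (fun ω => (g (Y1 ω) - g (Y0 ω)) * w (U ω)) := by
      simp only [exv]
      rw [← Finset.sum_sub_distrib]
      exact Finset.sum_congr rfl fun ω _ => by ring
    have split : exv p (fun ω => κ ω * g (Y ω)) =
        exv p (fun ω => κ ω * (D ω * g (Y1 ω))) +
          (exv p (fun ω => κ ω * g (Y0 ω)) - exv p (fun ω => κ ω * (D ω * g (Y0 ω)))) := by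
      simp only [exv]
      rw [← Finset.sum_sub_distrib, ← Finset.sum_add_distrib]
      refine Finset.sum_congr rfl fun ω _ => ?_
      rcases hDbin ω with h | h
      · rw [hYD0 ω h, h]; ring
      · rw [hYD1 ω h, h]; ring
    have keyN : exv p (fun ω => κ ω * g (Y ω)) =
        exv p (fun ω => (g (Y1 ω) - g (Y0 ω)) * w (U ω)) := by
      rw [split, M2Y1, M1Y0, M2Y0]
      linarith [final]
    have e1 : exv p (fun ω => κ ω * D ω) = exv p (fun ω => κ ω * (D ω * 1)) := by
      simp only [exv]
      exact Finset.sum_congr rfl fun ω _ => by ring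
    have e2 : exv p (fun ω => (1 : ℝ) * w (U ω)) = exv p (fun ω => w (U ω)) := by
      simp only [exv]
      exact Finset.sum_congr rfl fun ω _ => by ring
    have keyD : exv p (fun ω => κ ω * D ω) = exv p (fun ω => w (U ω)) := by
      rw [e1, M2one, e2]
    rw [keyN, keyD]
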